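/- Let M ≥ 2, d ≥ 2 be integers. The expectation of the squared periodic L₂-discrepancy, as H runs uniformly over all d-dimensional weak M-Latin hypercubes with point set X(H) = (1/M)H, equals ((M−1)(M+1)^d + (2M²+1)^d − 2^d·M^{2d}) / (6^d·M²). -/

import Mathlib

/-- `H` is a weak `M`-Latin hypercube: every axis-parallel row of the grid
`(Fin d → Fin M)` contains exactly one point of `H`. -/
def IsWeakLatinHypercube {d M : ℕ} (H : Finset (Fin d → Fin M)) : Prop :=
  ∀ (k : Fin d) (x : Fin d → Fin M), ∃! v : Fin M, Function.update x k v ∈ H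

/-- Squared periodic `L₂`-discrepancy of the point set `(1/M)·H`. -/
noncomputable def periodicL2sq {d M : ℕ} (H : Finset (Fin d → Fin M)) : ℝ :=
  -((M : ℝ) ^ (d - 1)) ^ 2 / 3 ^ d +
    ∑ x ∈ H, ∑ y ∈ H,
      ∏ k : Fin d,
        ((1 : ℝ) / 2 - |(x k : ℝ) / M - (y k : ℝ) / M| +
          |(x k : ℝ) / M - (y k : ℝ) / M| ^ 2)

open Finset


lemma sum_range_cast (M : ℕ) : ∑ i ∈ range M, (i:ℝ) = M*(M-1)/2 := by
  induction M with
  | zero => simp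
  | succ n ih => rw [sum_range_succ, ih]; push_cast; ring

lemma sum_range_sq_cast (M : ℕ) : ∑ i ∈ range M, (i:ℝ)^2 = M*(M-1)*(2*M-1)/6 := by
  induction M with
  | zero => simp
  | succ n ih => rw [sum_range_succ, ih]; push_cast; ring

lemma sum_pair_sq (M : ℕ) : ∑ i ∈ range M, ∑ j ∈ range M, ((i:ℝ)-j)^2 = M^2*(M^2-1)/6 := by
  have h1 := sum_range_cast M
  have h2 := sum_range_sq_cast M
  have step : ∀ i ∈ range M, ∑ j ∈ range M, ((i:ℝ)-j)^2
      = (M:ℝ)*(i:ℝ)^2 - 2*(i:ℝ)*((M:ℝ)*(M-1)/2) + (M:ℝ)*(M-1)*(2*M-1)/6 := by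
    intro i _
    have : ∀ j ∈ range M, ((i:ℝ)-j)^2 = (i:ℝ)^2 - 2*(i:ℝ)*(j:ℝ) + (j:ℝ)^2 := by
      intro j _; ring
    rw [sum_congr rfl this, sum_add_distrib, sum_sub_distrib, sum_const, ← mul_sum, h1, h2]
    simp [nsmul_eq_mul]
  rw [sum_congr rfl step, sum_add_distrib, sum_sub_distrib, sum_const, ← mul_sum, h2]
  have : ∑ i ∈ range M, 2*(i:ℝ) = 2*(M*(M-1)/2) := by rw [← mul_sum, h1]
  rw [← sum_mul, this]
  simp only [nsmul_eq_mul, card_range]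
  ring

lemma sum_pair_abs (M : ℕ) : ∑ i ∈ range M, ∑ j ∈ range M, |(i:ℝ)-j| = ((M:ℝ)^3-M)/3 := by
  induction M with
  | zero => simp
  | succ n ih =>
    have habs : ∀ j ∈ range n, |(n:ℝ) - j| = (n:ℝ) - j := by
      intro j hj
      have : (j:ℝ) ≤ n := by exact_mod_cast (mem_range.mp hj).le
      rw [abs_of_nonneg]; linarith
    have hlin : ∑ j ∈ range n, ((n:ℝ) - j) = (n:ℝ)*n - n*(n-1)/2 := by
      rw [sum_sub_distrib, sum_const, sum_range_cast]; simp [nsmul_eq_mul]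
    have h1 : ∑ j ∈ range (n+1), |(n:ℝ) - j| = (n:ℝ)*n - n*(n-1)/2 := by
      rw [sum_range_succ, sum_congr rfl habs, hlin]; simp
    have h2 : ∀ i ∈ range n, ∑ j ∈ range (n+1), |(i:ℝ)-j| =
        (∑ j ∈ range n, |(i:ℝ)-j|) + ((n:ℝ) - i) := by
      intro i hi
      rw [sum_range_succ, abs_sub_comm]
      congr 1
      exact habs i hi
    rw [sum_range_succ, h1, sum_congr rfl h2, sum_add_distrib, ih, hlin]
    push_cast; ring

noncomputable def g0 (M : ℕ) (a b : Fin M) : ℝ :=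
  (1:ℝ)/2 - |(a:ℝ)/M - (b:ℝ)/M| + |(a:ℝ)/M - (b:ℝ)/M|^2

lemma g0_eq (M : ℕ) (hM : 0 < M) (a b : Fin M) :
    g0 M a b = 1/2 - |(a:ℝ)-(b:ℝ)|/M + ((a:ℝ)-(b:ℝ))^2/M^2 := by
  have hM' : (0:ℝ) < M := by exact_mod_cast hM
  have h : |(a:ℝ)/M - (b:ℝ)/M| = |(a:ℝ)-(b:ℝ)|/M := by
    rw [div_sub_div_same, abs_div, abs_of_pos hM']
  rw [g0, h, div_pow, sq_abs]

lemma g0_diag (M : ℕ) (a : Fin M) : g0 M a a = 1/2 := by simp [g0]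

lemma g0_total (M : ℕ) (hM : 0 < M) :
    ∑ a : Fin M, ∑ b : Fin M, g0 M a b = (2*(M:ℝ)^2+1)/6 := by
  have hM' : (0:ℝ) < M := by exact_mod_cast hM
  have : ∀ a : Fin M, ∑ b : Fin M, g0 M a b
      = ∑ j ∈ range M, (1/2 - |(a:ℝ)-(j:ℝ)|/M + ((a:ℝ)-(j:ℝ))^2/M^2) := by
    intro a
    rw [← Fin.sum_univ_eq_sum_range (fun j => (1/2 - |(a:ℝ)-(j:ℝ)|/M + ((a:ℝ)-(j:ℝ))^2/M^2))]
    exact Finset.sum_congr rfl fun b _ => g0_eq M hM a b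
  rw [Finset.sum_congr rfl (fun a _ => this a),
    Fin.sum_univ_eq_sum_range (fun i => ∑ j ∈ range M, (1/2 - |(i:ℝ)-(j:ℝ)|/M + ((i:ℝ)-(j:ℝ))^2/M^2))]
  have expand : ∑ i ∈ range M, ∑ j ∈ range M, (1/2 - |(i:ℝ)-(j:ℝ)|/M + ((i:ℝ)-(j:ℝ))^2/M^2)
      = (M:ℝ)^2*(1/2) - ((M:ℝ)^3-M)/3/M + (M:ℝ)^2*((M:ℝ)^2-1)/6/M^2 := by
    have : ∀ i ∈ range M, ∑ j ∈ range M, (1/2 - |(i:ℝ)-(j:ℝ)|/M + ((i:ℝ)-(j:ℝ))^2/M^2)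
        = (M:ℝ)*(1/2) - (∑ j ∈ range M, |(i:ℝ)-(j:ℝ)|)/M + (∑ j ∈ range M, ((i:ℝ)-(j:ℝ))^2)/M^2 := by
      intro i _
      rw [sum_add_distrib, sum_sub_distrib, sum_const, sum_div, sum_div]
      simp [nsmul_eq_mul]
    rw [sum_congr rfl this, sum_add_distrib, sum_sub_distrib, sum_const, ← sum_div, ← sum_div,
      sum_pair_abs, sum_pair_sq]
    simp only [nsmul_eq_mul, card_range]
    ring
  rw [expand]
  field_simp
  ring

lemma exists_perm_pair {M : ℕ} {a b a' b' : Fin M} (hab : a ≠ b) (hab' : a' ≠ b') :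
    ∃ τ : Equiv.Perm (Fin M), τ a = a' ∧ τ b = b' := by
  classical
  set σ1 := Equiv.swap a a' with hσ1
  set b1 := σ1 b with hb1
  have hb1a' : b1 ≠ a' := by
    have : σ1 a = a' := Equiv.swap_apply_left a a'
    intro h; exact hab (σ1.injective (by rw [this, ← h]))
  refine ⟨σ1.trans (Equiv.swap b1 b'), ?_, ?_⟩
  · simp only [Equiv.trans_apply]
    rw [hσ1, Equiv.swap_apply_left]
    exact Equiv.swap_apply_of_ne_of_ne hb1a'.symm hab'
  · simp only [Equiv.trans_apply, ← hb1]
    exact Equiv.swap_apply_left b1 b'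

lemma perm_sum_const {M : ℕ} {a b a' b' : Fin M} (hab : a ≠ b) (hab' : a' ≠ b') :
    ∑ π : Equiv.Perm (Fin M), g0 M (π a') (π b')
      = ∑ π : Equiv.Perm (Fin M), g0 M (π a) (π b) := by
  obtain ⟨τ, ha, hb⟩ := exists_perm_pair hab hab'
  calc ∑ π : Equiv.Perm (Fin M), g0 M (π a') (π b')
      = ∑ π : Equiv.Perm (Fin M), g0 M ((Equiv.mulRight τ π) a) ((Equiv.mulRight τ π) b) := by
        refine Finset.sum_congr rfl fun π _ => ?_
        simp [Equiv.Perm.mul_apply, ha, hb]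
    _ = ∑ π : Equiv.Perm (Fin M), g0 M (π a) (π b) :=
        Equiv.sum_comp (Equiv.mulRight τ) (fun π => g0 M (π a) (π b))

lemma perm_sum_offdiag {M : ℕ} (hM : 2 ≤ M) {a b : Fin M} (hab : a ≠ b) :
    ∑ π : Equiv.Perm (Fin M), g0 M (π a) (π b)
      = (Nat.factorial M : ℝ) * (2*M-1)/(6*M) := by
  classical
  have hM0 : (0:ℝ) < M := by exact_mod_cast (by omega : 0 < M)
  have hM1 : (1:ℝ) < M := by exact_mod_cast hM
  set T := ∑ π : Equiv.Perm (Fin M), g0 M (π a) (π b) with hT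
  have hfull : ∑ π : Equiv.Perm (Fin M), ∑ a' : Fin M, ∑ b' : Fin M, g0 M (π a') (π b')
      = (Nat.factorial M : ℝ) * ((2*(M:ℝ)^2+1)/6) := by
    have : ∀ π : Equiv.Perm (Fin M), ∑ a' : Fin M, ∑ b' : Fin M, g0 M (π a') (π b')
        = (2*(M:ℝ)^2+1)/6 := by
      intro π
      have inner : ∀ a'' : Fin M, ∑ b' : Fin M, g0 M a'' (π b') = ∑ b' : Fin M, g0 M a'' b' :=
        fun a'' => Equiv.sum_comp π (g0 M a'')
      calc ∑ a' : Fin M, ∑ b' : Fin M, g0 M (π a') (π b')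
          = ∑ a' : Fin M, ∑ b' : Fin M, g0 M a' (π b') :=
            Equiv.sum_comp π (fun a' => ∑ b' : Fin M, g0 M a' (π b'))
        _ = ∑ a' : Fin M, ∑ b' : Fin M, g0 M a' b' := Finset.sum_congr rfl fun a' _ => inner a'
        _ = (2*(M:ℝ)^2+1)/6 := g0_total M (by omega)
    rw [Finset.sum_congr rfl fun π _ => this π, sum_const, card_univ, Fintype.card_perm,
      Fintype.card_fin, nsmul_eq_mul]
  have hswap : ∑ π : Equiv.Perm (Fin M), ∑ a' : Fin M, ∑ b' : Fin M, g0 M (π a') (π b')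
      = ∑ a' : Fin M, ∑ b' : Fin M, ∑ π : Equiv.Perm (Fin M), g0 M (π a') (π b') := by
    rw [Finset.sum_comm]
    exact Finset.sum_congr rfl fun a' _ => Finset.sum_comm
  have hdiagπ : ∀ a' : Fin M, ∑ π : Equiv.Perm (Fin M), g0 M (π a') (π a')
      = (Nat.factorial M : ℝ) * (1/2) := by
    intro a'
    rw [Finset.sum_congr rfl (fun π _ => g0_diag M (π a')), sum_const, card_univ,
      Fintype.card_perm, Fintype.card_fin, nsmul_eq_mul]
  have hstruct : ∑ a' : Fin M, ∑ b' : Fin M, ∑ π : Equiv.Perm (Fin M), g0 M (π a') (π b')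
      = (M:ℝ) * ((Nat.factorial M : ℝ) * (1/2)) + (M:ℝ) * ((M:ℝ)-1) * T := by
    have hrow : ∀ a' : Fin M, ∑ b' : Fin M, ∑ π : Equiv.Perm (Fin M), g0 M (π a') (π b')
        = (Nat.factorial M : ℝ) * (1/2) + ((M:ℝ)-1) * T := by
      intro a'
      rw [← Finset.add_sum_erase univ _ (mem_univ a'), hdiagπ]
      congr 1
      have : ∀ b' ∈ univ.erase a', ∑ π : Equiv.Perm (Fin M), g0 M (π a') (π b') = T := by
        intro b' hb'
        exact perm_sum_const hab (Finset.ne_of_mem_erase hb').symm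
      rw [Finset.sum_congr rfl this, sum_const, nsmul_eq_mul, card_erase_of_mem (mem_univ a'),
        card_univ, Fintype.card_fin]
      push_cast [Nat.cast_sub (by omega : 1 ≤ M)]
      ring
    rw [Finset.sum_congr rfl fun a' _ => hrow a', sum_add_distrib, sum_const, sum_const,
      card_univ, Fintype.card_fin, nsmul_eq_mul, nsmul_eq_mul]
    ring
  have heq : (M:ℝ) * ((Nat.factorial M : ℝ) * (1/2)) + (M:ℝ) * ((M:ℝ)-1) * T
      = (Nat.factorial M : ℝ) * ((2*(M:ℝ)^2+1)/6) := by
    rw [← hstruct, ← hswap, hfull]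
  have hne : (M:ℝ) * ((M:ℝ)-1) ≠ 0 := by
    apply mul_ne_zero (ne_of_gt hM0); linarith
  field_simp at heq ⊢
  nlinarith [heq]

lemma count_fiber {d M : ℕ} {H : Finset (Fin d → Fin M)} (hH : IsWeakLatinHypercube H) :
    ∀ (m : ℕ), 1 ≤ m → ∀ (S : Finset (Fin d)) (v : Fin d → Fin M), S.card + m = d →
      (H.filter (fun x => ∀ k ∈ S, x k = v k)).card = M ^ (m - 1) := by
  classical
  intro m
  induction m with
  | zero => intro h; omega
  | succ m' ih =>
    intro _ S v hcard
    by_cases hm' : m' = 0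
    · -- base case : S.card = d - 1
      subst hm'
      have hSc : (univ \ S).card = 1 := by
        rw [card_sdiff_of_subset (subset_univ S), card_univ, Fintype.card_fin]; omega
      obtain ⟨k₀, hk₀⟩ := card_eq_one.mp hSc
      have hmem : ∀ k, k ∉ S ↔ k = k₀ := by
        intro k
        constructor
        · intro h
          have : k ∈ univ \ S := by simp [h]
          rwa [hk₀, mem_singleton] at this
        · intro h
          have h2 : k₀ ∈ univ \ S := by rw [hk₀]; exact mem_singleton_self k₀
          rw [h]
          exact (mem_sdiff.mp h2).2
      obtain ⟨u, hu, huniq⟩ := hH k₀ v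
      have : H.filter (fun x => ∀ k ∈ S, x k = v k) = {Function.update v k₀ u} := by
        ext x
        simp only [mem_filter, mem_singleton]
        constructor
        · rintro ⟨hxH, hxS⟩
          have hxeq : x = Function.update v k₀ (x k₀) := by
            funext k
            by_cases hk : k = k₀
            · subst hk; rw [Function.update_self]
            · rw [Function.update_of_ne hk]
              exact hxS k (by by_contra hns; exact hk ((hmem k).mp hns))
          have hmem2 : Function.update v k₀ (x k₀) ∈ H := by rw [← hxeq]; exact hxH
          have : x k₀ = u := huniq (x k₀) hmem2
          rw [hxeq, this]
        · intro hx
          subst hx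
          refine ⟨hu, fun k hk => ?_⟩
          have hkne : k ≠ k₀ := fun h => ((hmem k₀).mpr rfl) (h ▸ hk)
          rw [Function.update_of_ne hkne]
      rw [this, card_singleton]
      simp
    · -- inductive step
      have hm'1 : 1 ≤ m' := by omega
      have hSlt : S.card < d := by omega
      have hex : (univ \ S).Nonempty := by
        rw [← card_pos, card_sdiff_of_subset (subset_univ S), card_univ, Fintype.card_fin]; omega
      obtain ⟨k₀, hk₀'⟩ := hex
      have hk₀ : k₀ ∉ S := (mem_sdiff.mp hk₀').2
      rw [Finset.card_eq_sum_card_fiberwise (f := fun x => x k₀) (t := univ)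
        (fun x _ => mem_univ _)]
      have hfib : ∀ u : Fin M,
          ((H.filter (fun x => ∀ k ∈ S, x k = v k)).filter (fun x => x k₀ = u)).card
            = M ^ (m' - 1) := by
        intro u
        rw [filter_filter]
        have heq : H.filter (fun x => (∀ k ∈ S, x k = v k) ∧ x k₀ = u)
            = H.filter (fun x => ∀ k ∈ insert k₀ S, x k = Function.update v k₀ u k) := by
          apply filter_congr
          intro x _
          constructor
          · rintro ⟨h1, h2⟩ k hk
            rcases mem_insert.mp hk with hk | hk
            · subst hk; rw [Function.update_self]; exact h2
            · have : k ≠ k₀ := fun h => hk₀ (h ▸ hk)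
              rw [Function.update_of_ne this]; exact h1 k hk
          · intro h
            refine ⟨fun k hk => ?_, ?_⟩
            · have hne : k ≠ k₀ := fun he => hk₀ (he ▸ hk)
              have := h k (mem_insert_of_mem hk)
              rwa [Function.update_of_ne hne] at this
            · have := h k₀ (mem_insert_self k₀ S)
              rwa [Function.update_self] at this
        rw [heq]
        exact ih hm'1 (insert k₀ S) (Function.update v k₀ u)
          (by rw [card_insert_of_notMem hk₀]; omega)
      rw [Finset.sum_congr rfl fun u _ => hfib u, sum_const, card_univ, Fintype.card_fin,
        smul_eq_mul]
      rw [← pow_succ']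
      congr 1
      omega

lemma card_H {d M : ℕ} {H : Finset (Fin d → Fin M)} (hH : IsWeakLatinHypercube H)
    (hM : 1 ≤ M) (hd : 1 ≤ d) : H.card = M ^ (d - 1) := by
  classical
  have h := count_fiber hH d hd ∅ (fun _ => ⟨0, by omega⟩) (by simp)
  rwa [filter_true_of_mem (fun x _ => by simp)] at h

lemma pair_sum_lt {d M : ℕ} {H : Finset (Fin d → Fin M)} (hH : IsWeakLatinHypercube H)
    (hM : 1 ≤ M) {S : Finset (Fin d)} (hS : S.card < d) :
    ∑ x ∈ H, ∑ y ∈ H, (if ∀ k ∈ S, x k = y k then (1:ℝ) else 0)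
      = (M:ℝ)^(d-1) * (M:ℝ)^(d-1-S.card) := by
  classical
  have hin : ∀ x : Fin d → Fin M,
      ∑ y ∈ H, (if ∀ k ∈ S, x k = y k then (1:ℝ) else 0) = (M:ℝ)^(d-1-S.card) := by
    intro x
    rw [Finset.sum_boole]
    have hflip : (H.filter fun y => ∀ k ∈ S, x k = y k)
        = H.filter fun y => ∀ k ∈ S, y k = x k := by
      apply filter_congr
      intro y _
      constructor <;> (intro h k hk; exact (h k hk).symm)
    rw [hflip, count_fiber hH (d - S.card) (by omega) S x (by omega)]
    norm_num
    congr 1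
    omega
  rw [Finset.sum_congr rfl fun x _ => hin x, sum_const, nsmul_eq_mul,
    card_H hH hM (by omega)]
  push_cast
  ring

lemma pair_sum_univ {d M : ℕ} {H : Finset (Fin d → Fin M)} (hH : IsWeakLatinHypercube H)
    (hM : 1 ≤ M) (hd : 1 ≤ d) :
    ∑ x ∈ H, ∑ y ∈ H, (if ∀ k ∈ (univ : Finset (Fin d)), x k = y k then (1:ℝ) else 0)
      = (M:ℝ)^(d-1) := by
  classical
  have hin : ∀ x ∈ H,
      ∑ y ∈ H, (if ∀ k ∈ (univ : Finset (Fin d)), x k = y k then (1:ℝ) else 0) = 1 := by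
    intro x hx
    have : ∀ y ∈ H, (if ∀ k ∈ (univ : Finset (Fin d)), x k = y k then (1:ℝ) else 0)
        = (if y = x then (1:ℝ) else 0) := by
      intro y _
      congr 1
      simp only [mem_univ, forall_true_left, eq_iff_iff]
      constructor
      · intro h; funext k; exact (h k).symm
      · intro h k; rw [h]
    rw [Finset.sum_congr rfl this, Finset.sum_ite_eq' H x (fun _ => (1:ℝ)), if_pos hx]
  rw [Finset.sum_congr rfl hin, sum_const, nsmul_eq_mul, mul_one, card_H hH hM hd]
  push_cast
  ring

noncomputable def wgt (M : ℕ) (a b : Fin M) : ℝ :=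
  if a = b then 1/2 else (2*(M:ℝ)-1)/(6*M)

lemma key_identity {d M : ℕ} {H : Finset (Fin d → Fin M)} (hH : IsWeakLatinHypercube H)
    (hM : 2 ≤ M) (hd : 2 ≤ d) :
    ∑ x ∈ H, ∑ y ∈ H, ∏ k : Fin d, wgt M (x k) (y k)
      = (M:ℝ)^(d-2) * ((2*(M:ℝ)^2+1)/(6*M))^d
        + ((M:ℝ)-1) * (M:ℝ)^(d-2) * (((M:ℝ)+1)/(6*M))^d := by
  classical
  have hM0 : (0:ℝ) < M := by exact_mod_cast (by omega : 0 < M)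
  obtain ⟨β, hβ⟩ : ∃ x : ℝ, x = (2*(M:ℝ)-1)/(6*M) := ⟨_, rfl⟩
  obtain ⟨γ, hγ⟩ : ∃ x : ℝ, x = ((M:ℝ)+1)/(6*M) := ⟨_, rfl⟩
  have hw : ∀ a b : Fin M, wgt M a b = γ * (if a = b then (1:ℝ) else 0) + β := by
    intro a b
    rw [wgt]
    by_cases h : a = b
    · rw [if_pos h, if_pos h, hβ, hγ]; field_simp; ring
    · rw [if_neg h, if_neg h, hβ]; ring
  -- expand the product
  have hsplit : ∀ x y : Fin d → Fin M, ∏ k : Fin d, wgt M (x k) (y k)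
      = ∑ S ∈ (univ : Finset (Fin d)).powerset,
          γ^S.card * (if ∀ k ∈ S, x k = y k then (1:ℝ) else 0) * β^(d - S.card) := by
    intro x y
    rw [Finset.prod_congr rfl (fun k _ => hw (x k) (y k)), Finset.prod_add]
    refine Finset.sum_congr rfl fun S hS => ?_
    rw [Finset.prod_const, card_sdiff_of_subset (mem_powerset.mp hS), card_univ, Fintype.card_fin,
      Finset.prod_mul_distrib, Finset.prod_const, Finset.prod_boole]
    simp
  rw [Finset.sum_congr rfl fun x _ => Finset.sum_congr rfl fun y (_ : y ∈ H) => hsplit x y]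
  rw [Finset.sum_congr rfl fun x (_ : x ∈ H) => Finset.sum_comm, Finset.sum_comm]
  -- now : ∑ S ∈ powerset, ∑ x ∈ H, ∑ y ∈ H, γ^|S| * χ * β^(d-|S|)
  have hSsum : ∀ S ∈ (univ : Finset (Fin d)).powerset,
      ∑ x ∈ H, ∑ y ∈ H, γ^S.card * (if ∀ k ∈ S, x k = y k then (1:ℝ) else 0) * β^(d - S.card)
      = γ^S.card * β^(d - S.card)
          * ∑ x ∈ H, ∑ y ∈ H, (if ∀ k ∈ S, x k = y k then (1:ℝ) else 0) := by
    intro S _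
    rw [Finset.mul_sum]
    refine Finset.sum_congr rfl fun x _ => ?_
    rw [Finset.mul_sum]
    refine Finset.sum_congr rfl fun y _ => ?_
    ring
  rw [Finset.sum_congr rfl hSsum]
  -- value of the inner double sums
  have hval : ∀ S ∈ (univ : Finset (Fin d)).powerset.erase univ,
      γ^S.card * β^(d - S.card)
          * ∑ x ∈ H, ∑ y ∈ H, (if ∀ k ∈ S, x k = y k then (1:ℝ) else 0)
      = (M:ℝ)^(d-2) * (γ^S.card * (β*(M:ℝ))^(d - S.card)) := by
    intro S hS
    have hSne : S ≠ univ := (Finset.mem_erase.mp hS).1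
    have hSlt : S.card < d := by
      have h1 : S.card ≤ d := by
        simpa [card_univ] using card_le_card (subset_univ S)
      have h2 : S.card ≠ d := by
        intro h
        exact hSne (Finset.eq_univ_of_card S (by simpa [card_univ] using h))
      omega
    rw [pair_sum_lt hH (by omega) hSlt]
    rw [mul_pow]
    have hpow : (M:ℝ)^(d-1) * (M:ℝ)^(d-1-S.card) = (M:ℝ)^(d-2) * (M:ℝ)^(d - S.card) := by
      rw [← pow_add, ← pow_add]
      congr 1
      omega
    rw [hpow]
    ring
  rw [← Finset.sum_erase_add _ _ (Finset.mem_powerset_self _ : (univ : Finset (Fin d)) ∈ _)]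
  rw [Finset.sum_congr rfl hval]
  rw [pair_sum_univ hH (by omega) (by omega), card_univ, Fintype.card_fin, Nat.sub_self,
    pow_zero, mul_one]
  -- compute the sum over all subsets
  have hfull : ∑ S ∈ (univ : Finset (Fin d)).powerset, γ^S.card * (β*(M:ℝ))^(d - S.card)
      = (γ + β*(M:ℝ))^d := by
    have hterm : ∀ S ∈ (univ : Finset (Fin d)).powerset,
        (∏ _i ∈ S, γ) * (∏ _i ∈ univ \ S, β*(M:ℝ))
          = γ^S.card * (β*(M:ℝ))^(d - S.card) := by
      intro S hS
      rw [Finset.prod_const, Finset.prod_const, card_sdiff_of_subset (mem_powerset.mp hS), card_univ,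
        Fintype.card_fin]
    calc ∑ S ∈ (univ : Finset (Fin d)).powerset, γ^S.card * (β*(M:ℝ))^(d - S.card)
        = ∑ S ∈ (univ : Finset (Fin d)).powerset,
            (∏ _i ∈ S, γ) * (∏ _i ∈ univ \ S, β*(M:ℝ)) := (Finset.sum_congr rfl hterm).symm
      _ = ∏ _k : Fin d, (γ + β*(M:ℝ)) := (Finset.prod_add _ _ _).symm
      _ = (γ + β*(M:ℝ))^d := by rw [Finset.prod_const, card_univ, Fintype.card_fin]
  have herase : ∑ S ∈ (univ : Finset (Fin d)).powerset.erase univ,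
      γ^S.card * (β*(M:ℝ))^(d - S.card) = (γ + β*(M:ℝ))^d - γ^d := by
    rw [eq_sub_iff_add_eq,
      show (γ:ℝ)^d = γ^(univ : Finset (Fin d)).card
          * (β*(M:ℝ))^(d - (univ : Finset (Fin d)).card) from by
        simp [card_univ]]
    exact (Finset.sum_erase_add _ _ (Finset.mem_powerset_self _)).trans hfull
  rw [← Finset.mul_sum, herase]
  have hgb : γ + β*(M:ℝ) = (2*(M:ℝ)^2+1)/(6*M) := by
    rw [hγ, hβ]; field_simp; ring
  rw [hgb]
  have hM12 : (M:ℝ)^(d-1) = (M:ℝ)^(d-2) * M := by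
    rw [← pow_succ]
    congr 1
    omega
  rw [hM12, hγ]
  ring

-- averaging over all coordinatewise permutations
lemma avg_perm {d M : ℕ} (hM : 2 ≤ M) (x y : Fin d → Fin M) :
    ∑ σ : Fin d → Equiv.Perm (Fin M), ∏ k : Fin d, g0 M (σ k (x k)) (σ k (y k))
      = ((Nat.factorial M : ℝ))^d * ∏ k : Fin d, wgt M (x k) (y k) := by
  classical
  have hstep := Finset.prod_univ_sum (t := fun _ : Fin d => (univ : Finset (Equiv.Perm (Fin M))))
    (f := fun k π => g0 M (π (x k)) (π (y k)))
  rw [Fintype.piFinset_univ] at hstep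
  rw [← hstep]
  have hcoord : ∀ k : Fin d, ∑ π : Equiv.Perm (Fin M), g0 M (π (x k)) (π (y k))
      = (Nat.factorial M : ℝ) * wgt M (x k) (y k) := by
    intro k
    by_cases h : x k = y k
    · rw [h]
      rw [Finset.sum_congr rfl (fun π _ => g0_diag M (π (y k))), sum_const, card_univ,
        Fintype.card_perm, Fintype.card_fin, nsmul_eq_mul, wgt, if_pos rfl]
    · rw [perm_sum_offdiag hM h, wgt, if_neg h]
      ring
  rw [Finset.prod_congr rfl fun k _ => hcoord k, Finset.prod_mul_distrib, Finset.prod_const,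
    card_univ, Fintype.card_fin]

def act {d M : ℕ} (σ : Fin d → Equiv.Perm (Fin M)) (H : Finset (Fin d → Fin M)) :
    Finset (Fin d → Fin M) :=
  H.image (fun x k => σ k (x k))

lemma act_inj {d M : ℕ} (σ : Fin d → Equiv.Perm (Fin M)) :
    Function.Injective (fun x : Fin d → Fin M => fun k => σ k (x k)) := by
  intro x x' h
  funext k
  exact (σ k).injective (congrFun h k)

lemma act_act {d M : ℕ} (σ τ : Fin d → Equiv.Perm (Fin M)) (H : Finset (Fin d → Fin M)) :
    act τ (act σ H) = act (fun k => τ k * σ k) H := by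
  rw [act, act, act, Finset.image_image]
  rfl

lemma act_inv {d M : ℕ} (σ : Fin d → Equiv.Perm (Fin M)) (H : Finset (Fin d → Fin M)) :
    act (fun k => (σ k)⁻¹) (act σ H) = H := by
  rw [act_act]
  have : (fun x : Fin d → Fin M => fun k => ((σ k)⁻¹ * σ k) (x k)) = id := by
    funext x
    funext k
    simp
  rw [act, this, Finset.image_id]

lemma act_mem {d M : ℕ} (σ : Fin d → Equiv.Perm (Fin M)) (H : Finset (Fin d → Fin M))
    (z : Fin d → Fin M) : z ∈ act σ H ↔ (fun k => (σ k)⁻¹ (z k)) ∈ H := by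
  rw [act, Finset.mem_image]
  constructor
  · rintro ⟨x, hx, rfl⟩
    have : (fun k => (σ k)⁻¹ (σ k (x k))) = x := by funext k; simp
    rwa [this]
  · intro h
    exact ⟨_, h, by funext k; simp⟩

lemma act_weak {d M : ℕ} (σ : Fin d → Equiv.Perm (Fin M)) {H : Finset (Fin d → Fin M)}
    (hH : IsWeakLatinHypercube H) : IsWeakLatinHypercube (act σ H) := by
  intro k x
  obtain ⟨u, hu, huniq⟩ := hH k (fun j => (σ j)⁻¹ (x j))
  refine ⟨σ k u, ?_, ?_⟩
  · have h3 : (fun j => (σ j)⁻¹ (Function.update x k (σ k u) j))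
        = Function.update (fun j => (σ j)⁻¹ (x j)) k u := by
      funext j
      by_cases hj : j = k
      · subst hj; rw [Function.update_self, Function.update_self]; simp
      · rw [Function.update_of_ne hj, Function.update_of_ne hj]
    exact (act_mem σ H _).mpr (by rw [h3]; exact hu)
  · intro v hv
    rw [act_mem] at hv
    have heq : (fun j => (σ j)⁻¹ (Function.update x k v j))
        = Function.update (fun j => (σ j)⁻¹ (x j)) k ((σ k)⁻¹ v) := by
      funext j
      by_cases hj : j = k
      · subst hj; rw [Function.update_self, Function.update_self]
      · rw [Function.update_of_ne hj, Function.update_of_ne hj]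
    rw [heq] at hv
    have := huniq ((σ k)⁻¹ v) hv
    have h2 : v = σ k ((σ k)⁻¹ v) := by simp
    rw [h2, this]

-- nonemptiness
lemma exists_weak (M d : ℕ) (hM : 2 ≤ M) (hd : 1 ≤ d) :
    ∃ H : Finset (Fin d → Fin M), IsWeakLatinHypercube H := by
  classical
  haveI : NeZero M := ⟨by omega⟩
  refine ⟨univ.filter (fun x : Fin d → Fin M => ∑ j : Fin d, ((x j : ℕ) : ZMod M) = 0), ?_⟩
  intro k x
  set c : ZMod M := ∑ j ∈ univ.erase k, ((x j : ℕ) : ZMod M) with hc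
  have hsum : ∀ v : Fin M, ∑ j : Fin d, ((Function.update x k v j : ℕ) : ZMod M)
      = ((v : ℕ) : ZMod M) + c := by
    intro v
    rw [← Finset.add_sum_erase _ _ (mem_univ k)]
    congr 1
    · rw [Function.update_self]
    · rw [hc]
      refine Finset.sum_congr rfl fun j hj => ?_
      rw [Function.update_of_ne (Finset.ne_of_mem_erase hj)]
  have hmem : ∀ v : Fin M, (Function.update x k v ∈
      univ.filter (fun x : Fin d → Fin M => ∑ j : Fin d, ((x j : ℕ) : ZMod M) = 0))
      ↔ ((v : ℕ) : ZMod M) = -c := by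
    intro v
    rw [mem_filter, hsum]
    constructor
    · rintro ⟨-, h⟩; linear_combination h
    · intro h; exact ⟨mem_univ _, by rw [h]; ring⟩
  refine ⟨⟨(-c).val, ZMod.val_lt _⟩, ?_, ?_⟩
  · exact (hmem _).mpr (ZMod.natCast_rightInverse (-c))
  · intro v hv
    rw [hmem] at hv
    apply Fin.ext
    have : ((v : ℕ) : ZMod M).val = (-c).val := by rw [hv]
    rwa [ZMod.val_cast_of_lt v.isLt] at this

noncomputable def Fg {d M : ℕ} (H : Finset (Fin d → Fin M)) : ℝ :=
  ∑ x ∈ H, ∑ y ∈ H, ∏ k : Fin d, g0 M (x k) (y k)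

open Classical in
theorem stmt_15 (M d : ℕ) (hM : 2 ≤ M) (hd : 2 ≤ d) :
    (∑ H ∈ Finset.univ.filter
        (fun H : Finset (Fin d → Fin M) => IsWeakLatinHypercube H), periodicL2sq H) /
        ((Finset.univ.filter
          (fun H : Finset (Fin d → Fin M) => IsWeakLatinHypercube H)).card : ℝ) =
      (((M : ℝ) - 1) * ((M : ℝ) + 1) ^ d + (2 * (M : ℝ) ^ 2 + 1) ^ d -
          2 ^ d * (M : ℝ) ^ (2 * d)) / (6 ^ d * (M : ℝ) ^ 2) := by
  classical
  set W := Finset.univ.filter (fun H : Finset (Fin d → Fin M) => IsWeakLatinHypercube H)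
    with hWdef
  have hmemW : ∀ H, H ∈ W ↔ IsWeakLatinHypercube H := by
    intro H; rw [hWdef, mem_filter]; simp
  -- W is nonempty
  obtain ⟨H₀, hH₀⟩ := exists_weak M d hM (by omega)
  have hWne : W.Nonempty := ⟨H₀, (hmemW H₀).mpr hH₀⟩
  have hWcard : (W.card : ℝ) ≠ 0 := by
    have := Finset.card_pos.mpr hWne
    positivity
  set C : ℝ := (M:ℝ)^(d-2) * ((2*(M:ℝ)^2+1)/(6*M))^d
        + ((M:ℝ)-1) * (M:ℝ)^(d-2) * (((M:ℝ)+1)/(6*M))^d with hC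
  -- main averaging step
  have hFg : ∑ H ∈ W, Fg H = (W.card : ℝ) * C := by
    have hfac : ((Nat.factorial M : ℝ))^d ≠ 0 := by positivity
    apply mul_left_cancel₀ hfac
    have hone : ∀ H ∈ W, ∑ σ : Fin d → Equiv.Perm (Fin M), Fg (act σ H)
        = ((Nat.factorial M : ℝ))^d * C := by
      intro H hHW
      have hH : IsWeakLatinHypercube H := (hmemW H).mp hHW
      have hFact : ∀ σ : Fin d → Equiv.Perm (Fin M), Fg (act σ H)
          = ∑ x ∈ H, ∑ y ∈ H, ∏ k : Fin d, g0 M (σ k (x k)) (σ k (y k)) := by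
        intro σ
        rw [Fg, act, Finset.sum_image (fun x _ y _ h => act_inj σ h)]
        refine Finset.sum_congr rfl fun x _ => ?_
        rw [Finset.sum_image (fun x _ y _ h => act_inj σ h)]
      rw [Finset.sum_congr rfl fun σ _ => hFact σ, Finset.sum_comm]
      rw [Finset.sum_congr rfl fun x _ => Finset.sum_comm]
      rw [Finset.sum_congr rfl fun x (_ : x ∈ H) => Finset.sum_congr rfl
        fun y (_ : y ∈ H) => avg_perm hM x y]
      have hpull : ∑ x ∈ H, ∑ y ∈ H, ((Nat.factorial M : ℝ))^d * ∏ k : Fin d, wgt M (x k) (y k)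
          = ((Nat.factorial M : ℝ))^d * ∑ x ∈ H, ∑ y ∈ H, ∏ k : Fin d, wgt M (x k) (y k) := by
        rw [Finset.mul_sum]
        exact Finset.sum_congr rfl fun x _ => (Finset.mul_sum _ _ _).symm
      rw [hpull, key_identity hH hM hd, hC]
    have htwo : ∀ σ : Fin d → Equiv.Perm (Fin M), ∑ H ∈ W, Fg (act σ H) = ∑ H ∈ W, Fg H := by
      intro σ
      refine Finset.sum_nbij' (fun H => act σ H) (fun H => act (fun k => (σ k)⁻¹) H)
        ?_ ?_ ?_ ?_ ?_
      · intro H hHW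
        exact (hmemW _).mpr (act_weak σ ((hmemW H).mp hHW))
      · intro H hHW
        exact (hmemW _).mpr (act_weak _ ((hmemW H).mp hHW))
      · intro H _
        exact act_inv σ H
      · intro H _
        have := act_inv (fun k => (σ k)⁻¹) H
        simpa using this
      · intro H _
        rfl
    calc ((Nat.factorial M : ℝ))^d * ∑ H ∈ W, Fg H
        = ∑ _σ : Fin d → Equiv.Perm (Fin M), ∑ H ∈ W, Fg H := by
          rw [Finset.sum_const, card_univ, Fintype.card_fun, Fintype.card_perm,
            Fintype.card_fin, nsmul_eq_mul]
          push_cast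
          simp [Fintype.card_fin]
      _ = ∑ σ : Fin d → Equiv.Perm (Fin M), ∑ H ∈ W, Fg (act σ H) :=
          (Finset.sum_congr rfl fun σ _ => (htwo σ).symm)
      _ = ∑ H ∈ W, ∑ σ : Fin d → Equiv.Perm (Fin M), Fg (act σ H) := Finset.sum_comm
      _ = ∑ H ∈ W, ((Nat.factorial M : ℝ))^d * C := Finset.sum_congr rfl hone
      _ = ((Nat.factorial M : ℝ))^d * ((W.card : ℝ) * C) := by
          rw [Finset.sum_const, nsmul_eq_mul]
          ring
  have hsplit : ∑ H ∈ W, periodicL2sq H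
      = (W.card : ℝ) * (-((M : ℝ) ^ (d - 1)) ^ 2 / 3 ^ d + C) := by
    have : ∀ H ∈ W, periodicL2sq H = -((M : ℝ) ^ (d - 1)) ^ 2 / 3 ^ d + Fg H := by
      intro H _
      rw [periodicL2sq, Fg]
      rfl
    rw [Finset.sum_congr rfl this, Finset.sum_add_distrib, hFg, Finset.sum_const, nsmul_eq_mul]
    ring
  rw [hsplit, mul_comm, mul_div_assoc, div_self hWcard, mul_one]
  -- final algebra
  obtain ⟨e, rfl⟩ : ∃ e, d = e + 2 := ⟨d - 2, by omega⟩
  have hM0 : (M:ℝ) ≠ 0 := by positivity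
  rw [hC]
  simp only [show e + 2 - 1 = e + 1 from rfl, show e + 2 - 2 = e from rfl]
  rw [div_pow, div_pow, mul_pow, show (6:ℝ) = 2*3 by norm_num, mul_pow]
  field_simp
  ring
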